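/- Let $b_1, b_2, c_1, c_2$ be generic real numbers and $s = (c_1 - b_1) + (c_2 - b_2)$. Then $$\sin\pi(z+c_1-s)\frac{\sin\pi(z+c_2)}{\sin\pi(c_1-c_2)}\sin\pi(c_1-b_1)\sin\pi(c_1-b_2) + \sin\pi(z+c_2-s)\frac{\sin\pi(z+c_1)}{\sin\pi(c_2-c_1)}\sin\pi(c_2-b_1)\sin\pi(c_2-b_2) = \sin(\pi s)\sin\pi(z+b_1)\sin\pi(z+b_2)$$ for all real $z$, provided $c_1 - c_2 \notin \mathbb{Z}$. -/

import Mathlib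

set_option autoImplicit false
set_option maxHeartbeats 2000000

open Real

/-- the `n = 2` trigonometric case of the interpolation identity
(Lemma 2 of the paper). -/
theorem stmt_5 (b₁ b₂ c₁ c₂ : ℝ) (s : ℝ) (hs : s = (c₁ - b₁) + (c₂ - b₂))
    (hgen : ∀ k : ℤ, c₁ - c₂ ≠ k) (z : ℝ) :
    Real.sin (π * (z + c₁ - s)) * (Real.sin (π * (z + c₂)) / Real.sin (π * (c₁ - c₂))) *
        Real.sin (π * (c₁ - b₁)) * Real.sin (π * (c₁ - b₂)) +
      Real.sin (π * (z + c₂ - s)) * (Real.sin (π * (z + c₁)) / Real.sin (π * (c₂ - c₁))) *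
        Real.sin (π * (c₂ - b₁)) * Real.sin (π * (c₂ - b₂)) =
      Real.sin (π * s) * Real.sin (π * (z + b₁)) * Real.sin (π * (z + b₂)) := by
  have hd : Real.sin (π * (c₁ - c₂)) ≠ 0 := by
    rw [Real.sin_ne_zero_iff]
    intro n h
    rw [mul_comm π] at h
    exact hgen n ((mul_right_cancel₀ Real.pi_ne_zero h).symm)
  have hd2 : Real.sin (π * (c₂ - c₁)) = - Real.sin (π * (c₁ - c₂)) := by
    rw [← Real.sin_neg]; ring_nf
  subst hs
  rw [hd2, div_neg]
  field_simp
  rw [← Complex.ofReal_inj]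
  push_cast
  simp only [Complex.sin, Complex.exp_sub, Complex.exp_add, Complex.exp_neg,
    mul_add, mul_sub, add_mul, sub_mul, neg_mul]
  set A := Complex.exp (↑π * ↑z * Complex.I) with hAdef
  set B := Complex.exp (↑π * ↑b₁ * Complex.I) with hBdef
  set C := Complex.exp (↑π * ↑b₂ * Complex.I) with hCdef
  set D := Complex.exp (↑π * ↑c₁ * Complex.I) with hDdef
  set E := Complex.exp (↑π * ↑c₂ * Complex.I) with hEdef
  have hA : A ≠ 0 := Complex.exp_ne_zero _
  have hB : B ≠ 0 := Complex.exp_ne_zero _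
  have hC : C ≠ 0 := Complex.exp_ne_zero _
  have hD : D ≠ 0 := Complex.exp_ne_zero _
  have hE : E ≠ 0 := Complex.exp_ne_zero _
  field_simp
  ring
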